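/- Let V be a vector space over ℂ, let q ≥ 1 and k ≥ 1 be integers, let ω be a nonzero alternating q-multilinear form on V with values in ℂ, and let m₁, …, m_k ∈ ℂ. Define f : V → V^k by f(v) = (m₁·v, …, m_k·v) and let ω_k be the alternating q-form on V^k given by the sum over i of the pullbacks of ω along the projections pr_i : V^k → V. Then the pullback of ω_k along f is the zero form if and only if ∑_{i=1}^k m_i^q = 0. -/

import Mathlib

/-- With `V`, `q, k ≥ 1`, `ω ≠ 0` an alternating `q`-form on `V`,
`m ∈ ℂ^k`, `f(v) = (m₁·v, …, m_k·v)` and `ω_k = ∑ i, pr_i^* ω`, the pullback `f^* ω_k`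
is the zero form if and only if `∑ i, m_i ^ q = 0`. -/
theorem pullback_sum_of_projections_alternating_form_eq_zero_iff
    (V : Type*) [AddCommGroup V] [Module ℂ V] (q k : ℕ) (hq : 1 ≤ q) (hk : 1 ≤ k)
    (ω : V [⋀^Fin q]→ₗ[ℂ] ℂ) (hω : ω ≠ 0) (m : Fin k → ℂ) :
    (∑ i : Fin k,
        ω.compLinearMap (LinearMap.proj i : (Fin k → V) →ₗ[ℂ] V)).compLinearMap
        (LinearMap.pi fun i : Fin k => m i • (LinearMap.id : V →ₗ[ℂ] V)) = 0
      ↔ ∑ i : Fin k, m i ^ q = 0 := by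
  have key : (∑ i : Fin k,
        ω.compLinearMap (LinearMap.proj i : (Fin k → V) →ₗ[ℂ] V)).compLinearMap
        (LinearMap.pi fun i : Fin k => m i • (LinearMap.id : V →ₗ[ℂ] V))
      = (∑ i : Fin k, m i ^ q) • ω := by
    have hsum : ∀ (s : Finset (Fin k)) (g : Fin k → ((Fin k → V) [⋀^Fin q]→ₗ[ℂ] ℂ))
        (w : Fin q → (Fin k → V)), (∑ i ∈ s, g i) w = ∑ i ∈ s, g i w := by
      intro s g w
      induction s using Finset.induction with
      | empty => simp
      | insert a s h ih => simp [Finset.sum_insert h, ih]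
    ext v
    rw [AlternatingMap.compLinearMap_apply]
    rw [hsum Finset.univ, AlternatingMap.smul_apply, smul_eq_mul, Finset.sum_mul]
    refine Finset.sum_congr rfl fun i _ => ?_
    rw [AlternatingMap.compLinearMap_apply]
    have : (fun j => (LinearMap.proj i : (Fin k → V) →ₗ[ℂ] V)
        ((LinearMap.pi fun i : Fin k => m i • (LinearMap.id : V →ₗ[ℂ] V)) (v j)))
        = fun j => m i • v j := by
      funext j; simp
    rw [this]
    have := ω.toMultilinearMap.map_smul_univ (fun _ => m i) v
    simpa [Finset.prod_const, Finset.card_univ] using this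
  rw [key]
  constructor
  · intro h
    by_contra hs
    exact hω (by simpa [hs, smul_eq_zero] using h)
  · intro h; rw [h, zero_smul]
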